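/- The map F: {u+iv : u > 0} → ℂ defined by F(u+iv) = -2·sinh v·cosh v·tanh u + i·(2u - tanh u) is a bijection from the open right half-plane onto the open upper half-plane {w : Im w > 0}. -/

import Mathlib

open Complex
open ComplexConjugate

/-- Wirtinger derivative `∂_z = (∂_u - i ∂_v)/2` of a map `ℂ → ℂ`. -/
noncomputable def Wz (f : ℂ → ℂ) (p : ℂ) : ℂ :=
  (1/2) * (fderiv ℝ f p 1 - I * fderiv ℝ f p I)

/-- Wirtinger derivative `∂_z̄ = (∂_u + i ∂_v)/2` of a map `ℂ → ℂ`. -/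
noncomputable def Wzb (f : ℂ → ℂ) (p : ℂ) : ℂ :=
  (1/2) * (fderiv ℝ f p 1 + I * fderiv ℝ f p I)

/-- Wirtinger derivative `∂_z` of a real-valued function on `ℂ`. -/
noncomputable def WzR (h : ℂ → ℝ) (p : ℂ) : ℂ :=
  (1/2) * ((fderiv ℝ h p 1 : ℝ) - I * (fderiv ℝ h p I : ℝ))

/-- `1 - |w|²` as a complex number. -/
noncomputable def NS (w : ℂ) : ℂ := ((1 - Complex.normSq w : ℝ) : ℂ)

/-- `η = 8i·conj(g)·g_z/(1-|g|²)²`. -/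
noncomputable def Eta (g : ℂ → ℂ) (z : ℂ) : ℂ :=
  8 * I * conj (g z) * Wz g z / (NS (g z))^2


lemma tanh_hasDerivAt (x : ℝ) : HasDerivAt Real.tanh (1 / Real.cosh x ^ 2) x := by
  have h := (Real.hasDerivAt_sinh x).div (Real.hasDerivAt_cosh x) (ne_of_gt (Real.cosh_pos x))
  have hfun : Real.tanh = Real.sinh / Real.cosh :=
    funext fun y => Real.tanh_eq_sinh_div_cosh y
  rw [hfun]
  refine h.congr_deriv ?_
  rw [show Real.cosh x * Real.cosh x - Real.sinh x * Real.sinh x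
      = Real.cosh x ^ 2 - Real.sinh x ^ 2 by ring, Real.cosh_sq_sub_sinh_sq]

lemma psi_hasDerivAt (x : ℝ) :
    HasDerivAt (fun u : ℝ => 2 * u - Real.tanh u) (2 - 1 / Real.cosh x ^ 2) x :=
  by
  have h := ((hasDerivAt_id x).const_mul 2).sub (tanh_hasDerivAt x)
  rw [mul_one] at h
  exact h

lemma psi_strictMono : StrictMono (fun u : ℝ => 2 * u - Real.tanh u) := by
  apply strictMono_of_deriv_pos
  intro x
  rw [(psi_hasDerivAt x).deriv]
  have h1 : (1:ℝ) ≤ Real.cosh x ^ 2 := by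
    have := Real.one_le_cosh x; nlinarith
  have : 1 / Real.cosh x ^ 2 ≤ 1 := by
    rw [div_le_one (by positivity)]; exact h1
  linarith

lemma tanh_pos_of_pos {u : ℝ} (hu : 0 < u) : 0 < Real.tanh u := by
  rw [Real.tanh_eq_sinh_div_cosh]
  exact div_pos (Real.sinh_pos_iff.2 hu) (Real.cosh_pos u)

theorem stmt15 :
    Set.BijOn (fun z : ℂ =>
        ((-2 * Real.sinh z.im * Real.cosh z.im * Real.tanh z.re : ℝ) : ℂ)
          + I * ((2 * z.re - Real.tanh z.re : ℝ) : ℂ))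
      {z : ℂ | 0 < z.re} {w : ℂ | 0 < w.im} := by
  set ψ : ℝ → ℝ := fun u => 2 * u - Real.tanh u with hψ
  have hψ0 : ψ 0 = 0 := by simp [hψ]
  refine ⟨?_, ?_, ?_⟩
  · intro z hz
    simp only [Set.mem_setOf_eq] at hz ⊢
    have h : ψ 0 < ψ z.re := psi_strictMono hz
    rw [hψ0] at h
    simpa only [Complex.add_im, Complex.ofReal_im, Complex.mul_im, Complex.I_re,
      Complex.I_im, Complex.ofReal_re, hψ, zero_mul, one_mul, zero_add, mul_zero] using h
  · intro z1 h1 z2 h2 heq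
    simp only [Set.mem_setOf_eq] at h1 h2
    have him := congrArg Complex.im heq
    have hre := congrArg Complex.re heq
    simp only [Complex.add_im, Complex.add_re, Complex.ofReal_im, Complex.ofReal_re,
      Complex.mul_im, Complex.mul_re, Complex.I_re, Complex.I_im] at him hre
    have hu : z1.re = z2.re := psi_strictMono.injective (by simpa [hψ] using him)
    have ht : 0 < Real.tanh z1.re := tanh_pos_of_pos h1
    have hv : Real.sinh (2 * z1.im) = Real.sinh (2 * z2.im) := by
      rw [Real.sinh_two_mul, Real.sinh_two_mul]
      rw [← hu] at hre
      have h2s : (2 * Real.sinh z1.im * Real.cosh z1.im) * Real.tanh z1.re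
          = (2 * Real.sinh z2.im * Real.cosh z2.im) * Real.tanh z1.re := by
        linarith
      have := mul_right_cancel₀ (ne_of_gt ht) h2s
      linarith
    have : z1.im = z2.im := by
      have := Real.sinh_injective hv
      linarith
    exact Complex.ext hu this
  · intro w hw
    simp only [Set.mem_setOf_eq] at hw
    -- find u > 0 with ψ u = w.im
    set M : ℝ := (w.im + 1) / 2 with hM
    have hMpos : 0 < M := by positivity
    have htanhM : Real.tanh M < 1 := by
      rw [Real.tanh_eq_sinh_div_cosh, div_lt_one (Real.cosh_pos M)]
      exact Real.sinh_lt_cosh M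
    have hψM : w.im < ψ M := by
      simp only [hψ, hM]; linarith
    have hcont : ContinuousOn ψ (Set.Icc 0 M) :=
      by
      have htc : Continuous Real.tanh := by
        have : Real.tanh = fun y => Real.sinh y / Real.cosh y :=
          funext fun y => Real.tanh_eq_sinh_div_cosh y
        rw [this]
        exact Real.continuous_sinh.div Real.continuous_cosh fun x => ne_of_gt (Real.cosh_pos x)
      exact ((continuous_const.mul continuous_id).sub htc).continuousOn
    have := intermediate_value_Ioo (le_of_lt hMpos) hcont
    have hmem : w.im ∈ Set.Ioo (ψ 0) (ψ M) := ⟨by rw [hψ0]; exact hw, hψM⟩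
    obtain ⟨u, hu, hψu⟩ := this hmem
    have hupos : 0 < u := hu.1
    have ht : 0 < Real.tanh u := tanh_pos_of_pos hupos
    set v : ℝ := Real.arsinh (-w.re / Real.tanh u) / 2 with hv
    refine ⟨⟨u, v⟩, hupos, ?_⟩
    have hre : Complex.re (⟨u, v⟩ : ℂ) = u := rfl
    have him : Complex.im (⟨u, v⟩ : ℂ) = v := rfl
    have hsinh : 2 * Real.sinh v * Real.cosh v = -w.re / Real.tanh u := by
      rw [← Real.sinh_two_mul, hv]
      rw [show 2 * (Real.arsinh (-w.re / Real.tanh u) / 2)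
          = Real.arsinh (-w.re / Real.tanh u) by ring, Real.sinh_arsinh]
    apply Complex.ext
    · simp only [Complex.add_re, Complex.ofReal_re, Complex.mul_re, Complex.I_re,
        Complex.I_im, Complex.ofReal_im, hre, him]
      rw [show -2 * Real.sinh v * Real.cosh v * Real.tanh u
          = -((2 * Real.sinh v * Real.cosh v) * Real.tanh u) by ring, hsinh]
      field_simp
      ring
    · simp only [Complex.add_im, Complex.ofReal_im, Complex.mul_im, Complex.I_re,
        Complex.I_im, Complex.ofReal_re, hre]
      simpa [hψ] using hψu
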